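/- Let P ⊂ {(α;ζ) ∈ ℝ^6 × ℝ : ∑α_i = 1} be defined by the inequalities |1/2+ζ| ≤ 1/2, |1/2+ζ| - 1/2 ≤ α_i, α_i ≤ 1 + α_j, α_i + α_j ≤ 1, and 3/2 ≥ α_i + α_j + α_k + |1/2+ζ| (for all applicable distinct indices). Let G be the group generated by the E_6-root-lattice translations (generated by (-1/2,-1/2,-1/2,1/2,1/2,1/2;1/2) and (e_i - e_{i+1};0), i=0..4) and the flip (α;ζ) ↦ (-α_0,-α_1,1-α_2,1-α_3,-α_4,-α_5;ζ). Then for any (α;ζ) with ∑_i α_i = 1, there exists g ∈ G with g(α;ζ) ∈ P. -/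

import Mathlib

/-- The generator `(-1/2,-1/2,-1/2,1/2,1/2,1/2; 1/2)` of the `E₆` root lattice of
shifts. -/
noncomputable def gen0 : (Fin 6 → ℝ) × ℝ :=
  (fun i => if (i : ℕ) < 3 then -(1 / 2) else 1 / 2, 1 / 2)

/-- The root-difference generators `(e_i - e_{i+1}; 0)`, `i = 0,…,4`. -/
noncomputable def genD (i : Fin 5) : (Fin 6 → ℝ) × ℝ :=
  (fun j => if j = i.castSucc then 1 else if j = i.succ then -1 else 0, 0)

/-- The flip `(α; ζ) ↦ (-α₀, -α₁, 1-α₂, 1-α₃, -α₄, -α₅; ζ)`. -/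
noncomputable def flipMap : (Fin 6 → ℝ) × ℝ → (Fin 6 → ℝ) × ℝ :=
  fun v => (fun i => if (i : ℕ) = 2 ∨ (i : ℕ) = 3 then 1 - v.1 i else -v.1 i, v.2)

theorem flipMap_involutive : Function.Involutive flipMap := by
  intro v
  unfold flipMap
  refine Prod.ext ?_ rfl
  funext i
  dsimp only
  split_ifs <;> ring

/-- The flip as a permutation of `ℝ⁶ × ℝ`. -/
noncomputable def flipPerm : Equiv.Perm ((Fin 6 → ℝ) × ℝ) :=
  flipMap_involutive.toPerm _

/-- A translation, as a permutation of `ℝ⁶ × ℝ`. -/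
noncomputable def transPerm (v : (Fin 6 → ℝ) × ℝ) : Equiv.Perm ((Fin 6 → ℝ) × ℝ) :=
  Equiv.addRight v

/-- The group `G` generated by the `E₆` root-lattice translations and the flip. -/
noncomputable def Ggroup : Subgroup (Equiv.Perm ((Fin 6 → ℝ) × ℝ)) :=
  Subgroup.closure ({flipPerm, transPerm gen0} ∪ Set.range fun i => transPerm (genD i))

/-- Membership in the polytope `P`: `|1/2 + ζ| ≤ 1/2`; `|1/2 + ζ| - 1/2 ≤ α_i`;
`α_i ≤ 1 + α_j` and `α_i + α_j ≤ 1` for `i ≠ j`;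
`3/2 ≥ α_i + α_j + α_k + |1/2 + ζ|` for distinct `i, j, k`; and `∑ α_i = 1`. -/
def memP (v : (Fin 6 → ℝ) × ℝ) : Prop :=
  |1 / 2 + v.2| ≤ 1 / 2 ∧
  (∀ i, |1 / 2 + v.2| - 1 / 2 ≤ v.1 i) ∧
  (∀ i j, i ≠ j → v.1 i ≤ 1 + v.1 j) ∧
  (∀ i j, i ≠ j → v.1 i + v.1 j ≤ 1) ∧
  (∀ i j k, i ≠ j → i ≠ k → j ≠ k → 3 / 2 ≥ v.1 i + v.1 j + v.1 k + |1 / 2 + v.2|) ∧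
  (∑ i, v.1 i) = 1

/-- For any `(α; ζ)` with `∑ α_i = 1`, there exists `g ∈ G` (the group generated by the
`E₆` root-lattice translations and the flip) with `g(α; ζ) ∈ P`. -/
-- === infra ===
lemma transPerm_apply (v x : (Fin 6 → ℝ) × ℝ) : transPerm v x = x + v := rfl

lemma flipPerm_apply (x : (Fin 6 → ℝ) × ℝ) : flipPerm x = flipMap x := rfl

lemma transPerm_mul (a b : (Fin 6 → ℝ) × ℝ) :
    transPerm a * transPerm b = transPerm (a + b) := by
  apply Equiv.ext
  intro x
  simp [transPerm_apply, Equiv.Perm.mul_apply, add_assoc, add_comm b a]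

lemma mem_flip : flipPerm ∈ Ggroup :=
  Subgroup.subset_closure (Or.inl (Or.inl rfl))

lemma mem_gen0 : transPerm gen0 ∈ Ggroup :=
  Subgroup.subset_closure (Or.inl (Or.inr rfl))

lemma mem_genD (i : Fin 5) : transPerm (genD i) ∈ Ggroup :=
  Subgroup.subset_closure (Or.inr ⟨i, rfl⟩)

lemma mem_add {a b : (Fin 6 → ℝ) × ℝ} (ha : transPerm a ∈ Ggroup)
    (hb : transPerm b ∈ Ggroup) : transPerm (a + b) ∈ Ggroup := by
  rw [← transPerm_mul]
  exact mul_mem ha hb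

lemma transPerm_inv (a : (Fin 6 → ℝ) × ℝ) : (transPerm a)⁻¹ = transPerm (-a) := by
  rw [eq_comm, eq_inv_iff_mul_eq_one, transPerm_mul]
  apply Equiv.ext
  intro x
  simp [transPerm_apply]

lemma mem_neg {a : (Fin 6 → ℝ) × ℝ} (ha : transPerm a ∈ Ggroup) :
    transPerm (-a) ∈ Ggroup := by
  rw [← transPerm_inv]
  exact inv_mem ha

lemma mem_nsmul (c : ℕ) {a : (Fin 6 → ℝ) × ℝ} (ha : transPerm a ∈ Ggroup) :
    transPerm ((c : ℤ) • a) ∈ Ggroup := by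
  induction c with
  | zero =>
      simp only [Nat.cast_zero, zero_smul]
      have : transPerm (0 : (Fin 6 → ℝ) × ℝ) = 1 := by
        apply Equiv.ext; intro x; simp [transPerm_apply]
      rw [this]; exact one_mem _
  | succ n ih =>
      have : ((n + 1 : ℕ) : ℤ) • a = ((n : ℕ) : ℤ) • a + a := by
        push_cast; rw [add_smul, one_smul]
      rw [this]
      exact mem_add ih ha

lemma mem_zsmul (c : ℤ) {a : (Fin 6 → ℝ) × ℝ} (ha : transPerm a ∈ Ggroup) :
    transPerm (c • a) ∈ Ggroup := by
  rcases Int.natAbs_eq c with h | h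
  · rw [h]; exact mem_nsmul _ ha
  · rw [h, neg_smul]; exact mem_neg (mem_nsmul _ ha)

-- === Fin value helpers ===
lemma fv6_0 : ((0:Fin 6):ℕ) = 0 := rfl
lemma fv6_1 : ((1:Fin 6):ℕ) = 1 := rfl
lemma fv6_2 : ((2:Fin 6):ℕ) = 2 := rfl
lemma fv6_3 : ((3:Fin 6):ℕ) = 3 := rfl
lemma fv6_4 : ((4:Fin 6):ℕ) = 4 := rfl
lemma fv6_5 : ((5:Fin 6):ℕ) = 5 := rfl
lemma fv5_0 : ((0:Fin 5):ℕ) = 0 := rfl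
lemma fv5_1 : ((1:Fin 5):ℕ) = 1 := rfl
lemma fv5_2 : ((2:Fin 5):ℕ) = 2 := rfl
lemma fv5_3 : ((3:Fin 5):ℕ) = 3 := rfl
lemma fv5_4 : ((4:Fin 5):ℕ) = 4 := rfl

-- === lattice ===
lemma mem_a5 (n : Fin 6 → ℤ) (hn : ∑ l, n l = 0) :
    transPerm (fun l => ((n l : ℝ)), (0:ℝ)) ∈ Ggroup := by
  have hn6 : n 0 + n 1 + n 2 + n 3 + n 4 + n 5 = 0 := by
    rw [← hn, Fin.sum_univ_six]
  have hn6R : (n 0 : ℝ) + n 1 + n 2 + n 3 + n 4 + n 5 = 0 := by exact_mod_cast hn6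
  have h : transPerm ((n 0 : ℤ) • genD 0 + ((n 0 + n 1 : ℤ) • genD 1 +
      ((n 0 + n 1 + n 2 : ℤ) • genD 2 + ((n 0 + n 1 + n 2 + n 3 : ℤ) • genD 3 +
      (n 0 + n 1 + n 2 + n 3 + n 4 : ℤ) • genD 4)))) ∈ Ggroup :=
    mem_add (mem_zsmul _ (mem_genD 0)) (mem_add (mem_zsmul _ (mem_genD 1))
      (mem_add (mem_zsmul _ (mem_genD 2)) (mem_add (mem_zsmul _ (mem_genD 3))
        (mem_zsmul _ (mem_genD 4)))))
  have key : (fun l => ((n l : ℝ)), (0:ℝ)) =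
      (n 0 : ℤ) • genD 0 + ((n 0 + n 1 : ℤ) • genD 1 +
      ((n 0 + n 1 + n 2 : ℤ) • genD 2 + ((n 0 + n 1 + n 2 + n 3 : ℤ) • genD 3 +
      (n 0 + n 1 + n 2 + n 3 + n 4 : ℤ) • genD 4))) := by
    apply Prod.ext
    · funext l
      fin_cases l <;>
        (simp only [genD, Prod.fst_add, Pi.add_apply, zsmul_eq_mul, Pi.mul_apply,
          Pi.intCast_apply] <;> skip) <;>
        norm_num [fv6_0, fv6_1, fv6_2, fv6_3, fv6_4, fv6_5,
          fv5_0, fv5_1, fv5_2, fv5_3, fv5_4] <;>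
        push_cast <;> linarith [hn6R]
    · simp [genD, Prod.snd_add]
  rw [key]
  exact h

lemma mem_zero_one : transPerm ((fun _ => (0:ℝ)), (1:ℝ)) ∈ Ggroup := by
  have h := mem_add (mem_zsmul 2 mem_gen0) (mem_a5 ![1,1,1,-1,-1,-1] (by decide))
  have key : ((fun _ => (0:ℝ)), (1:ℝ)) =
      (2:ℤ) • gen0 + ((fun l => ((![1,1,1,-1,-1,-1] l : ℤ) : ℝ)), (0:ℝ)) := by
    apply Prod.ext
    · funext l
      fin_cases l <;>
        norm_num [gen0, Prod.fst_add, Pi.add_apply, zsmul_eq_mul,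
          fv6_0, fv6_1, fv6_2, fv6_3, fv6_4, fv6_5]
    · norm_num [gen0, Prod.snd_add]
  rw [key]
  exact h

lemma mem_latt (n : Fin 6 → ℤ) (hn : ∑ l, n l = 0) (m k : ℤ) :
    transPerm (fun l => (n l : ℝ) + (m : ℝ) * gen0.1 l, (m : ℝ)/2 + (k:ℝ)) ∈ Ggroup := by
  have h := mem_add (mem_a5 n hn) (mem_add (mem_zsmul m mem_gen0)
    (mem_zsmul k mem_zero_one))
  have key : ((fun l => (n l : ℝ) + (m : ℝ) * gen0.1 l, (m : ℝ)/2 + (k:ℝ)) :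
      (Fin 6 → ℝ) × ℝ) =
      ((fun l => ((n l : ℝ))), (0:ℝ)) + (m • gen0 + k • ((fun _ => (0:ℝ)), (1:ℝ))) := by
    apply Prod.ext
    · funext l
      simp [Prod.fst_add, Pi.add_apply, zsmul_eq_mul]
    · simp [gen0, Prod.snd_add, zsmul_eq_mul]
      ring
  rw [key]
  exact h

-- === sum helpers ===
lemma sum_shift_sq (x v : Fin 6 → ℝ) :
    ∑ l, (x l + v l)^2 =
      (∑ l, (x l)^2) + 2 * (∑ l, v l * x l) + ∑ l, (v l)^2 := by
  rw [Finset.sum_congr rfl (fun l _ => by ring :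
    ∀ l ∈ Finset.univ, (x l + v l)^2 = (x l)^2 + (2 * (v l * x l) + (v l)^2))]
  rw [Finset.sum_add_distrib, Finset.sum_add_distrib, ← Finset.mul_sum]
  ring

lemma sum_sub_sq (w x : Fin 6 → ℝ) :
    ∑ l, (w l - x l)^2 =
      (∑ l, (x l)^2) - 2 * (∑ l, w l * x l) + ∑ l, (w l)^2 := by
  rw [Finset.sum_congr rfl (fun l _ => by ring :
    ∀ l ∈ Finset.univ, (w l - x l)^2 = (x l)^2 + (-2 * (w l * x l) + (w l)^2))]
  rw [Finset.sum_add_distrib, Finset.sum_add_distrib, ← Finset.mul_sum]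
  ring

lemma sum_ind_mul (s : Finset (Fin 6)) (a b : ℝ) (x : Fin 6 → ℝ) :
    ∑ l, (if l ∈ s then a else b) * x l =
      (a - b) * (∑ l ∈ s, x l) + b * ∑ l, x l := by
  rw [Finset.sum_congr rfl (fun l _ => by split_ifs <;> ring :
    ∀ l ∈ Finset.univ, (if l ∈ s then a else b) * x l =
      (if l ∈ s then (a - b) * x l else 0) + b * x l)]
  rw [Finset.sum_add_distrib, Finset.sum_ite_mem, Finset.univ_inter,
    ← Finset.mul_sum, ← Finset.mul_sum]

lemma sum_ind {R : Type*} [CommRing R] (s : Finset (Fin 6)) (a b : R) :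
    ∑ l, (if l ∈ s then a else b) = (s.card : R) * (a - b) + 6 * b := by
  rw [Finset.sum_congr rfl (fun l _ => by split_ifs <;> ring :
    ∀ l ∈ Finset.univ, (if l ∈ s then a else b) =
      (if l ∈ s then (a - b) else 0) + b)]
  rw [Finset.sum_add_distrib, Finset.sum_ite_mem, Finset.univ_inter,
    Finset.sum_const, Finset.sum_const]
  simp [mul_comm]

lemma sum_ind_sq (s : Finset (Fin 6)) (a b : ℝ) :
    ∑ l, (if l ∈ s then a else b)^2 = (s.card : ℝ) * (a^2 - b^2) + 6 * b^2 := by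
  rw [Finset.sum_congr rfl (fun l _ => by split_ifs <;> ring :
    ∀ l ∈ Finset.univ, (if l ∈ s then a else b)^2 = (if l ∈ s then a^2 else b^2))]
  rw [sum_ind s (a^2) (b^2)]

-- === discreteness set ===
def Dset (α : Fin 6 → ℝ) (ζ : ℝ) : Set ((Fin 6 → ℝ) × ℝ) :=
  {p | (∀ l, ∃ n : ℤ, p.1 l = α l + n/2 ∨ p.1 l = -α l + n/2) ∧
       (∃ n : ℤ, p.2 = ζ + n/2) ∧ (∑ l, p.1 l = 1)}

lemma Dset_add (α : Fin 6 → ℝ) (ζ : ℝ) (v : (Fin 6 → ℝ) × ℝ)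
    (hv : ∀ l, ∃ n : ℤ, v.1 l = n/2) (hz : ∃ n : ℤ, v.2 = n/2)
    (hs : ∑ l, v.1 l = 0) :
    ∀ p ∈ Dset α ζ, p + v ∈ Dset α ζ := by
  rintro p ⟨h1, ⟨nz, h2⟩, h3⟩
  refine ⟨fun l => ?_, ?_, ?_⟩
  · obtain ⟨n, hn⟩ := h1 l
    obtain ⟨m, hm⟩ := hv l
    refine ⟨n + m, ?_⟩
    have e : (p + v).1 l = p.1 l + v.1 l := rfl
    rw [e, hm]
    rcases hn with h | h
    · left; rw [h]; push_cast; ring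
    · right; rw [h]; push_cast; ring
  · obtain ⟨m, hm⟩ := hz
    refine ⟨nz + m, ?_⟩
    have e : (p + v).2 = p.2 + v.2 := rfl
    rw [e, h2, hm]; push_cast; ring
  · have e : ∑ l, (p + v).1 l = ∑ l, (p.1 l + v.1 l) := rfl
    rw [e, Finset.sum_add_distrib, h3, hs, add_zero]

lemma Dset_iff_add (α : Fin 6 → ℝ) (ζ : ℝ) (v : (Fin 6 → ℝ) × ℝ)
    (hv : ∀ l, ∃ n : ℤ, v.1 l = n/2) (hz : ∃ n : ℤ, v.2 = n/2)
    (hs : ∑ l, v.1 l = 0) :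
    ∀ p, p ∈ Dset α ζ ↔ p + v ∈ Dset α ζ := by
  intro p
  constructor
  · exact fun h => Dset_add α ζ v hv hz hs p h
  · intro h
    have hv' : ∀ l, ∃ n : ℤ, (-v).1 l = n/2 := fun l => by
      obtain ⟨n, hn⟩ := hv l
      exact ⟨-n, by show -(v.1 l) = _; rw [hn]; push_cast; ring⟩
    have hz' : ∃ n : ℤ, (-v).2 = n/2 := by
      obtain ⟨n, hn⟩ := hz
      exact ⟨-n, by show -(v.2) = _; rw [hn]; push_cast; ring⟩
    have hs' : ∑ l, (-v).1 l = 0 := by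
      have e : ∀ l, (-v).1 l = -(v.1 l) := fun l => rfl
      simp only [e, Finset.sum_neg_distrib, hs, neg_zero]
    have := Dset_add α ζ (-v) hv' hz' hs' (p + v) h
    simpa using this

lemma Dset_flip (α : Fin 6 → ℝ) (ζ : ℝ) :
    ∀ p ∈ Dset α ζ, flipMap p ∈ Dset α ζ := by
  rintro p ⟨h1, h2, h3⟩
  refine ⟨fun l => ?_, ?_, ?_⟩
  · obtain ⟨n, hn⟩ := h1 l
    by_cases hc : (l:ℕ) = 2 ∨ (l:ℕ) = 3
    · refine ⟨2 - n, ?_⟩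
      have e : (flipMap p).1 l = 1 - p.1 l := by simp [flipMap, hc]
      rw [e]
      rcases hn with h | h
      · right; rw [h]; push_cast; ring
      · left; rw [h]; push_cast; ring
    · refine ⟨-n, ?_⟩
      have e : (flipMap p).1 l = -p.1 l := by simp [flipMap, hc]
      rw [e]
      rcases hn with h | h
      · right; rw [h]; push_cast; ring
      · left; rw [h]; push_cast; ring
  · exact h2
  · have e : ∀ l, (flipMap p).1 l =
        (if (l:ℕ) = 2 ∨ (l:ℕ) = 3 then (1:ℝ) - p.1 l else -p.1 l) := fun l => rfl
    rw [Fin.sum_univ_six] at h3 ⊢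
    simp only [e]
    norm_num [fv6_0, fv6_1, fv6_2, fv6_3, fv6_4, fv6_5]
    linarith [h3]

lemma orbit_D (α : Fin 6 → ℝ) (ζ : ℝ) :
    ∀ g ∈ Ggroup, ∀ p, p ∈ Dset α ζ ↔ g p ∈ Dset α ζ := by
  intro g hg
  induction hg using Subgroup.closure_induction with
  | mem x hx =>
      simp only [Set.mem_union, Set.mem_insert_iff, Set.mem_singleton_iff,
        Set.mem_range] at hx
      rcases hx with (hx | hx) | ⟨i, rfl⟩
      · subst hx
        intro p
        constructor
        · intro h
          have e : flipPerm p = flipMap p := rfl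
          rw [e]; exact Dset_flip α ζ p h
        · intro h
          have e : flipPerm p = flipMap p := rfl
          rw [e] at h
          have := Dset_flip α ζ _ h
          rwa [flipMap_involutive p] at this
      · subst hx
        intro p
        have := Dset_iff_add α ζ gen0 ?_ ?_ ?_ p
        · exact this
        · intro l
          by_cases hc : (l:ℕ) < 3
          · exact ⟨-1, by norm_num [gen0, hc]⟩
          · exact ⟨1, by norm_num [gen0, hc]⟩
        · exact ⟨1, by norm_num [gen0]⟩
        · norm_num [gen0, Fin.sum_univ_six, fv6_0, fv6_1, fv6_2, fv6_3, fv6_4, fv6_5]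
      · intro p
        have := Dset_iff_add α ζ (genD i) ?_ ?_ ?_ p
        · exact this
        · intro l
          rcases eq_or_ne l i.castSucc with h | h
          · exact ⟨2, by norm_num [genD, h, (Fin.castSucc_lt_succ (i := i)).ne']⟩
          · rcases eq_or_ne l i.succ with h' | h'
            · refine ⟨-2, ?_⟩
              have hne : l ≠ i.castSucc := h
              norm_num [genD, hne, h']
              exact (Fin.castSucc_lt_succ (i := i)).ne'
            · exact ⟨0, by simp [genD, h, h']⟩
        · exact ⟨0, by norm_num [genD]⟩
        · fin_cases i <;>
            simp only [genD, Fin.sum_univ_six] <;>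
            norm_num [Fin.ext_iff,
              fv6_0, fv6_1, fv6_2, fv6_3, fv6_4, fv6_5,
              fv5_0, fv5_1, fv5_2, fv5_3, fv5_4]
  | one => intro p; simp
  | mul x y hx hy ihx ihy =>
      intro p
      rw [ihy p, ihx (y p)]
      exact Iff.rfl
  | inv x hx ih =>
      intro p
      have := (ih (x⁻¹ p)).symm
      rwa [Equiv.Perm.coe_inv, Equiv.apply_symm_apply] at this

-- === energies and finiteness ===
noncomputable def fE : (Fin 6 → ℝ) × ℝ → ℝ :=
  fun p => (∑ l, (p.1 l)^2) + 2*(p.2 + 1/2)^2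

lemma abs_le_of_sq_le {x B : ℝ} (h : x^2 ≤ B) : |x| ≤ B + 1 := by
  nlinarith [sq_abs x, abs_nonneg x, sq_nonneg (|x| - 1)]

lemma coord_sq_le (p : (Fin 6 → ℝ) × ℝ) (l : Fin 6) : (p.1 l)^2 ≤ fE p := by
  unfold fE
  have h1 : (p.1 l)^2 ≤ ∑ m, (p.1 m)^2 :=
    Finset.single_le_sum (f := fun m => (p.1 m)^2) (fun m _ => sq_nonneg _)
      (Finset.mem_univ l)
  nlinarith [sq_nonneg (p.2 + 1/2)]

lemma zeta_sq_le (p : (Fin 6 → ℝ) × ℝ) : (p.2 + 1/2)^2 ≤ fE p := by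
  unfold fE
  have h1 : (0:ℝ) ≤ ∑ m, (p.1 m)^2 := Finset.sum_nonneg (fun m _ => sq_nonneg _)
  nlinarith [sq_nonneg (p.2 + 1/2)]

lemma coset_finite (c R : ℝ) : {x : ℝ | (∃ n : ℤ, x = c + n/2) ∧ |x| ≤ R}.Finite := by
  apply Set.Finite.subset
    (Set.Finite.image (fun n : ℤ => c + n/2)
      (Set.finite_Icc (-⌈2*(R + |c|)⌉) ⌈2*(R + |c|)⌉))
  rintro x ⟨⟨n, rfl⟩, hx⟩
  refine ⟨n, ?_, rfl⟩
  rw [Set.mem_Icc]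
  have h2 : |(n:ℝ)| ≤ 2*(R + |c|) := by
    have : |(n:ℝ)/2| ≤ R + |c| := by
      calc |(n:ℝ)/2| = |(c + n/2) - c| := by ring_nf
        _ ≤ |c + n/2| + |c| := abs_sub _ _
        _ ≤ R + |c| := by linarith
    rw [abs_div] at this
    norm_num at this
    linarith
  rw [abs_le] at h2
  constructor
  · have : (-⌈2*(R + |c|)⌉ : ℝ) ≤ (n:ℝ) := by
      have := Int.le_ceil (2*(R + |c|))
      push_cast
      linarith [h2.1]
    exact_mod_cast this
  · have : (n:ℝ) ≤ (⌈2*(R + |c|)⌉ : ℝ) := le_trans h2.2 (Int.le_ceil _)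
    exact_mod_cast this

lemma pair_finite (a b R : ℝ) :
    {x : ℝ | (∃ n : ℤ, x = a + n/2 ∨ x = b + n/2) ∧ |x| ≤ R}.Finite := by
  apply Set.Finite.subset ((coset_finite a R).union (coset_finite b R))
  rintro x ⟨⟨n, h | h⟩, hx⟩
  · exact Or.inl ⟨⟨n, h⟩, hx⟩
  · exact Or.inr ⟨⟨n, h⟩, hx⟩

lemma D_inter_finite (α : Fin 6 → ℝ) (ζ : ℝ) (B : ℝ) :
    {p | p ∈ Dset α ζ ∧ fE p ≤ B}.Finite := by
  apply Set.Finite.subset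
    ((Set.Finite.pi (fun l => pair_finite (α l) (-(α l)) (B+1))).prod
      (coset_finite ζ (B+2)))
  rintro p ⟨⟨h1, ⟨nz, h2⟩, _⟩, hB⟩
  constructor
  · intro l _
    refine ⟨h1 l, ?_⟩
    exact abs_le_of_sq_le (le_trans (coord_sq_le p l) hB)
  · refine ⟨⟨nz, h2⟩, ?_⟩
    have h3 : |p.2 + 1/2| ≤ B + 1 := abs_le_of_sq_le (le_trans (zeta_sq_le p) hB)
    rw [abs_le] at h3 ⊢
    constructor <;> [linarith [h3.1]; linarith [h3.2]]

-- === move evaluations ===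
lemma mem_latt' (n : Fin 6 → ℤ) (hn : ∑ l, n l = 0) (m k : ℤ)
    (v : (Fin 6 → ℝ) × ℝ)
    (h1 : ∀ l, v.1 l = (n l : ℝ) + (m:ℝ) * gen0.1 l) (h2 : v.2 = (m:ℝ)/2 + (k:ℝ)) :
    transPerm v ∈ Ggroup := by
  have h := mem_latt n hn m k
  have e : v = (fun l => (n l : ℝ) + (m:ℝ) * gen0.1 l, (m:ℝ)/2 + (k:ℝ)) := by
    apply Prod.ext
    · exact funext h1
    · exact h2
  rw [e]; exact h

lemma fE_transmove (p v : (Fin 6 → ℝ) × ℝ) :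
    fE (transPerm v p) = (∑ l, (p.1 l)^2) + 2*(∑ l, v.1 l * p.1 l) +
      (∑ l, (v.1 l)^2) + 2*(p.2 + v.2 + 1/2)^2 := by
  have e : fE (transPerm v p) =
      (∑ l, (p.1 l + v.1 l)^2) + 2*(p.2 + v.2 + 1/2)^2 := rfl
  rw [e, sum_shift_sq]

lemma fE_flipmove (p u : (Fin 6 → ℝ) × ℝ) (w : Fin 6 → ℝ)
    (hww : ∀ l, u.1 l = w l - (if (l:ℕ)=2 ∨ (l:ℕ)=3 then (1:ℝ) else 0)) :
    fE ((transPerm u * flipPerm) p) = (∑ l, (p.1 l)^2) - 2*(∑ l, w l * p.1 l) +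
      (∑ l, (w l)^2) + 2*(p.2 + u.2 + 1/2)^2 := by
  have e : (transPerm u * flipPerm) p = (flipMap p) + u := rfl
  rw [e]
  have e2 : fE ((flipMap p) + u) =
      (∑ l, ((flipMap p).1 l + u.1 l)^2) + 2*(p.2 + u.2 + 1/2)^2 := rfl
  rw [e2]
  have e3 : ∀ l ∈ Finset.univ, ((flipMap p).1 l + u.1 l)^2 = (w l - p.1 l)^2 := by
    intro l _
    have e4 : (flipMap p).1 l =
        if (l:ℕ)=2 ∨ (l:ℕ)=3 then 1 - p.1 l else -p.1 l := rfl
    rw [e4, hww l]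
    split_ifs <;> ring
  rw [Finset.sum_congr rfl e3, sum_sub_sq]

lemma fE_self (p : (Fin 6 → ℝ) × ℝ) :
    fE p = (∑ l, (p.1 l)^2) + 2*(p.2 + 1/2)^2 := rfl

-- === condition 1 : |1/2 + ζ| ≤ 1/2 ===
lemma cond_zeta (p : (Fin 6 → ℝ) × ℝ)
    (hmin : ∀ g ∈ Ggroup, fE p ≤ fE (g p)) : |1/2 + p.2| ≤ 1/2 := by
  have hplus := hmin _ mem_zero_one
  have hminus := hmin _ (mem_neg mem_zero_one)
  rw [fE_transmove] at hplus hminus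
  rw [fE_self p] at hplus hminus
  simp only [Prod.fst_neg, Prod.snd_neg, Pi.neg_apply, neg_zero, mul_zero,
    zero_mul, Finset.sum_const_zero, neg_neg, zero_pow, ne_eq, add_zero] at hplus hminus
  norm_num at hplus hminus
  rw [abs_le]
  constructor <;> nlinarith [hplus, hminus]

-- === condition 2 : singles ===
lemma cond_single (p : (Fin 6 → ℝ) × ℝ)
    (hmin : ∀ g ∈ Ggroup, fE p ≤ fE (g p)) (hs1 : ∑ l, p.1 l = 1) (j : Fin 6) :
    |1/2 + p.2| - 1/2 ≤ p.1 j := by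
  classical
  have hn : ∑ l, ((if l ∈ ({j}:Finset (Fin 6)) then (0:ℤ) else 1) +
      (if (l:ℕ)=2 ∨ (l:ℕ)=3 then -1 else 0) + (if (l:ℕ)<3 then 0 else -1)) = 0 := by
    rw [Finset.sum_add_distrib, Finset.sum_add_distrib,
      sum_ind ({j}:Finset (Fin 6)) (0:ℤ) 1]
    norm_num [Fin.sum_univ_six, fv6_0, fv6_1, fv6_2, fv6_3, fv6_4, fv6_5]
  have hcoord : ∀ c : ℝ, ∀ l,
      (((fun l => (if l ∈ ({j}:Finset (Fin 6)) then -(1:ℝ)/2 else 1/2) -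
        (if (l:ℕ)=2 ∨ (l:ℕ)=3 then (1:ℝ) else 0)), c) : (Fin 6 → ℝ) × ℝ).1 l =
      (((if l ∈ ({j}:Finset (Fin 6)) then (0:ℤ) else 1) +
      (if (l:ℕ)=2 ∨ (l:ℕ)=3 then -1 else 0) + (if (l:ℕ)<3 then 0 else -1) : ℤ) : ℝ) +
      ((1:ℤ):ℝ) * gen0.1 l := by
    intro c l
    simp only [gen0]
    split_ifs <;> push_cast <;> norm_num
  have hm1 : transPerm (((fun l => (if l ∈ ({j}:Finset (Fin 6)) then -(1:ℝ)/2 else 1/2) -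
      (if (l:ℕ)=2 ∨ (l:ℕ)=3 then (1:ℝ) else 0)), (1/2:ℝ))) ∈ Ggroup :=
    mem_latt' _ hn 1 0 _ (hcoord (1/2)) (by norm_num)
  have hm2 : transPerm (((fun l => (if l ∈ ({j}:Finset (Fin 6)) then -(1:ℝ)/2 else 1/2) -
      (if (l:ℕ)=2 ∨ (l:ℕ)=3 then (1:ℝ) else 0)), (-1/2:ℝ))) ∈ Ggroup :=
    mem_latt' _ hn 1 (-1) _ (hcoord (-1/2)) (by norm_num)
  have hq1 := hmin _ (mul_mem hm1 mem_flip)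
  have hq2 := hmin _ (mul_mem hm2 mem_flip)
  rw [fE_flipmove p _ (fun l => if l ∈ ({j}:Finset (Fin 6)) then -(1:ℝ)/2 else 1/2)
    (fun l => rfl), fE_self p] at hq1 hq2
  simp only [sum_ind_mul, sum_ind_sq, Finset.sum_singleton, Finset.card_singleton,
    hs1, Nat.cast_one] at hq1 hq2
  have habs : |1/2 + p.2| ≤ p.1 j + 1/2 := by
    rw [abs_le]
    constructor <;> nlinarith [hq1, hq2]
  linarith

-- === condition 3 : differences ===
lemma cond_diff (p : (Fin 6 → ℝ) × ℝ)
    (hmin : ∀ g ∈ Ggroup, fE p ≤ fE (g p)) {i j : Fin 6} (hij : i ≠ j) :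
    p.1 i ≤ 1 + p.1 j := by
  classical
  have hn : ∑ l, ((if l ∈ ({j}:Finset (Fin 6)) then (1:ℤ) else 0) +
      (if l ∈ ({i}:Finset (Fin 6)) then (-1:ℤ) else 0)) = 0 := by
    rw [Finset.sum_add_distrib, sum_ind ({j}:Finset (Fin 6)) (1:ℤ) 0,
      sum_ind ({i}:Finset (Fin 6)) (-1:ℤ) 0]
    norm_num
  have hmem : transPerm (((fun l => (if l ∈ ({j}:Finset (Fin 6)) then (1:ℝ) else 0) +
      (if l ∈ ({i}:Finset (Fin 6)) then (-1:ℝ) else 0)), (0:ℝ))) ∈ Ggroup := by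
    refine mem_latt' _ hn 0 0 _ ?_ (by norm_num)
    intro l
    simp only
    split_ifs <;> push_cast <;> norm_num
  have hq := hmin _ hmem
  rw [fE_transmove, fE_self p] at hq
  have hv1 : ∑ l, ((fun l => (if l ∈ ({j}:Finset (Fin 6)) then (1:ℝ) else 0) +
      (if l ∈ ({i}:Finset (Fin 6)) then (-1:ℝ) else 0)) l * p.1 l) =
      p.1 j - p.1 i := by
    rw [Finset.sum_congr rfl (fun l _ => by ring :
      ∀ l ∈ Finset.univ, ((fun l => (if l ∈ ({j}:Finset (Fin 6)) then (1:ℝ) else 0) +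
        (if l ∈ ({i}:Finset (Fin 6)) then (-1:ℝ) else 0)) l * p.1 l) =
        (if l ∈ ({j}:Finset (Fin 6)) then (1:ℝ) else 0) * p.1 l +
        (if l ∈ ({i}:Finset (Fin 6)) then (-1:ℝ) else 0) * p.1 l)]
    rw [Finset.sum_add_distrib, sum_ind_mul, sum_ind_mul]
    simp [Finset.sum_singleton]
    ring
  have hv2 : ∑ l, (((fun l => (if l ∈ ({j}:Finset (Fin 6)) then (1:ℝ) else 0) +
      (if l ∈ ({i}:Finset (Fin 6)) then (-1:ℝ) else 0)) l)^2) = 2 := by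
    rw [Finset.sum_congr rfl (?_ :
      ∀ l ∈ Finset.univ, (((fun l => (if l ∈ ({j}:Finset (Fin 6)) then (1:ℝ) else 0) +
        (if l ∈ ({i}:Finset (Fin 6)) then (-1:ℝ) else 0)) l)^2) =
        (if l ∈ ({j}:Finset (Fin 6)) then (1:ℝ) else 0) +
        (if l ∈ ({i}:Finset (Fin 6)) then (1:ℝ) else 0))]
    · rw [Finset.sum_add_distrib, sum_ind, sum_ind]
      norm_num
    · intro l _
      simp only [Finset.mem_singleton]
      split_ifs with h1 h2
      · exact absurd (h2.symm.trans h1) hij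
      · norm_num
      · norm_num
      · norm_num
  rw [hv1, hv2] at hq
  nlinarith [hq]

-- === condition 4 : pairs ===
lemma cond_pair (p : (Fin 6 → ℝ) × ℝ)
    (hmin : ∀ g ∈ Ggroup, fE p ≤ fE (g p)) {i j : Fin 6} (hij : i ≠ j) :
    p.1 i + p.1 j ≤ 1 := by
  classical
  have hn : ∑ l, ((if l ∈ ({i,j}:Finset (Fin 6)) then (1:ℤ) else 0) +
      (if (l:ℕ)=2 ∨ (l:ℕ)=3 then -1 else 0)) = 0 := by
    rw [Finset.sum_add_distrib, sum_ind ({i,j}:Finset (Fin 6)) (1:ℤ) 0,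
      Finset.card_pair hij]
    norm_num [Fin.sum_univ_six, fv6_0, fv6_1, fv6_2, fv6_3, fv6_4, fv6_5]
  have hmem : transPerm (((fun l => (if l ∈ ({i,j}:Finset (Fin 6)) then (1:ℝ) else 0) -
      (if (l:ℕ)=2 ∨ (l:ℕ)=3 then (1:ℝ) else 0)), (0:ℝ))) ∈ Ggroup := by
    refine mem_latt' _ hn 0 0 _ ?_ (by norm_num)
    intro l
    simp only
    split_ifs <;> push_cast <;> norm_num
  have hq := hmin _ (mul_mem hmem mem_flip)
  rw [fE_flipmove p _ (fun l => if l ∈ ({i,j}:Finset (Fin 6)) then (1:ℝ) else 0)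
    (fun l => rfl), fE_self p] at hq
  have hsum2 : ∑ l ∈ ({i,j}:Finset (Fin 6)), p.1 l = p.1 i + p.1 j :=
    Finset.sum_pair hij
  simp only [sum_ind_mul, sum_ind_sq, hsum2, Finset.card_pair hij,
    Nat.cast_ofNat] at hq
  nlinarith [hq]

-- === condition 5 : triples ===
lemma cond_triple (p : (Fin 6 → ℝ) × ℝ)
    (hmin : ∀ g ∈ Ggroup, fE p ≤ fE (g p)) (hs1 : ∑ l, p.1 l = 1)
    {i j k : Fin 6} (hij : i ≠ j) (hik : i ≠ k) (hjk : j ≠ k) :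
    3/2 ≥ p.1 i + p.1 j + p.1 k + |1/2 + p.2| := by
  classical
  have hnm : i ∉ ({j,k}:Finset (Fin 6)) := by simp [hij, hik]
  have hcard : ({i,j,k} : Finset (Fin 6)).card = 3 := by
    rw [Finset.card_insert_of_notMem hnm, Finset.card_pair hjk]
  have hsum3 : ∑ l ∈ ({i,j,k}:Finset (Fin 6)), p.1 l = p.1 i + (p.1 j + p.1 k) := by
    rw [Finset.sum_insert hnm, Finset.sum_pair hjk]
  have hn : ∑ l, ((if l ∈ ({i,j,k}:Finset (Fin 6)) then (0:ℤ) else 1) +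
      (if (l:ℕ)<3 then 0 else -1)) = 0 := by
    rw [Finset.sum_add_distrib, sum_ind ({i,j,k}:Finset (Fin 6)) (0:ℤ) 1, hcard]
    norm_num [Fin.sum_univ_six, fv6_0, fv6_1, fv6_2, fv6_3, fv6_4, fv6_5]
  have hcoord : ∀ c : ℝ, ∀ l,
      (((fun l => if l ∈ ({i,j,k}:Finset (Fin 6)) then -(1:ℝ)/2 else 1/2), c) :
        (Fin 6 → ℝ) × ℝ).1 l =
      (((if l ∈ ({i,j,k}:Finset (Fin 6)) then (0:ℤ) else 1) +
        (if (l:ℕ)<3 then 0 else -1) : ℤ) : ℝ) + ((1:ℤ):ℝ) * gen0.1 l := by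
    intro c l
    simp only [gen0]
    split_ifs <;> push_cast <;> norm_num
  have hm1 : transPerm (((fun l => if l ∈ ({i,j,k}:Finset (Fin 6)) then -(1:ℝ)/2 else 1/2),
      (1/2:ℝ))) ∈ Ggroup := mem_latt' _ hn 1 0 _ (hcoord (1/2)) (by norm_num)
  have hm2 : transPerm (((fun l => if l ∈ ({i,j,k}:Finset (Fin 6)) then -(1:ℝ)/2 else 1/2),
      (-1/2:ℝ))) ∈ Ggroup := mem_latt' _ hn 1 (-1) _ (hcoord (-1/2)) (by norm_num)
  have hq1 := hmin _ hm1
  have hq2 := hmin _ hm2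
  rw [fE_transmove, fE_self p] at hq1 hq2
  simp only [sum_ind_mul, sum_ind_sq, hsum3, hcard, hs1, Nat.cast_ofNat] at hq1 hq2
  have habs : |1/2 + p.2| ≤ 3/2 - (p.1 i + p.1 j + p.1 k) := by
    rw [abs_le]
    constructor <;> nlinarith [hq1, hq2]
  linarith


/-- For any `(α; ζ)` with `∑ α_i = 1`, there exists `g ∈ G` (the group generated by the
`E₆` root-lattice translations and the flip) with `g(α; ζ) ∈ P`. -/
theorem map_into_P (α : Fin 6 → ℝ) (ζ : ℝ) (hsum : ∑ i, α i = 1) :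
    ∃ g ∈ Ggroup, memP (g (α, ζ)) := by
  classical
  set O : Set ((Fin 6 → ℝ) × ℝ) := {p | ∃ g ∈ Ggroup, g (α, ζ) = p} with hO
  have hbase : (α, ζ) ∈ Dset α ζ :=
    ⟨fun l => ⟨0, Or.inl (by norm_num)⟩, ⟨0, by norm_num⟩, hsum⟩
  have hOD : O ⊆ Dset α ζ := by
    rintro p ⟨g, hg, rfl⟩
    exact (orbit_D α ζ g hg (α, ζ)).mp hbase
  have hO0 : (α, ζ) ∈ O := ⟨1, one_mem _, rfl⟩
  have hfin : {p | p ∈ O ∧ fE p ≤ fE (α, ζ)}.Finite := by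
    apply (D_inter_finite α ζ (fE (α, ζ))).subset
    rintro p ⟨hp, h2⟩
    exact ⟨hOD hp, h2⟩
  obtain ⟨p, ⟨hpO, hpB⟩, hpmin⟩ :=
    Set.exists_min_image _ fE hfin ⟨(α, ζ), hO0, le_refl _⟩
  have hmin : ∀ g ∈ Ggroup, fE p ≤ fE (g p) := by
    intro g hg
    obtain ⟨g0, hg0, hg0e⟩ := hpO
    have hgpO : g p ∈ O := ⟨g * g0, mul_mem hg hg0,
      by rw [Equiv.Perm.mul_apply, hg0e]⟩
    by_cases h : fE (g p) ≤ fE (α, ζ)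
    · exact hpmin _ ⟨hgpO, h⟩
    · linarith [hpB, not_le.mp h]
  have hs1 : ∑ l, p.1 l = 1 := (hOD hpO).2.2
  obtain ⟨g0, hg0, hg0e⟩ := hpO
  refine ⟨g0, hg0, ?_⟩
  rw [hg0e]
  refine ⟨cond_zeta p hmin, fun i => cond_single p hmin hs1 i,
    fun i j hij => cond_diff p hmin hij,
    fun i j hij => cond_pair p hmin hij,
    fun i j k hij hik hjk => cond_triple p hmin hs1 hij hik hjk, hs1⟩
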